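/- Shift-invariance of the linear components space: let H : F_2^{2b} → F_2^{2b} be the superposition S-box of two CA with nonlinear bipermutive rules f, g of diameter b+1. Suppose v = (v_1,…,v_b,v_{b+1},…,v_{2b}) is nonzero, v·H is affine, and v_b = v_{2b} = 0. Then the vector v' obtained by shifting each half of v one position to the right (v'_{i+1} = v_i for 1 ≤ i ≤ b−1, v'_1 = 0; v'_{b+i+1} = v_{b+i} for 1 ≤ i ≤ b−1, v'_{b+1} = 0) also yields an affine component v'·H. -/

import Mathlib

/-- The binary Möbius transform, giving the ANF coefficients of `f`. -/
def moebius {n : ℕ} (f : (Fin n → ZMod 2) → ZMod 2) : (Fin n → ZMod 2) → ZMod 2 :=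
  fun u => ∑ x ∈ Finset.univ.filter (fun x : Fin n → ZMod 2 => ∀ i, x i ≠ 0 → u i ≠ 0), f x

/-- The algebraic degree of a Boolean function. -/
def degB {n : ℕ} (f : (Fin n → ZMod 2) → ZMod 2) : ℕ :=
  (Finset.univ.filter (fun u : Fin n → ZMod 2 => moebius f u ≠ 0)).sup
    (fun u => (Finset.univ.filter (fun i => u i ≠ 0)).card)

/-- A Boolean function is affine if it is of the form `x ↦ a·x ⊕ c`. -/
def IsAffine {n : ℕ} (g : (Fin n → ZMod 2) → ZMod 2) : Prop :=
  ∃ (a : Fin n → ZMod 2) (c : ZMod 2), ∀ x, g x = (∑ i, a i * x i) + c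

/-- Right-shift invariance of the linear components space of a superposition
S-box: if `v·H` is affine and the last coordinate of each half of `v` is zero,
then the vector `v'` obtained by shifting each half of `v` one position to the
right also yields an affine component `v'·H` (here `b = m + 1`). -/
theorem lcs_right_shift_invariant (m : ℕ)
    (f g : (Fin (m + 2) → ZMod 2) → ZMod 2)
    (f' g' : (Fin m → ZMod 2) → ZMod 2)
    (hf : ∀ x, f x = x 0 + f' (fun i => x i.succ.castSucc) + x (Fin.last (m + 1)))
    (hg : ∀ x, g x = x 0 + g' (fun i => x i.succ.castSucc) + x (Fin.last (m + 1)))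
    (hfdeg : 2 ≤ degB f) (hgdeg : 2 ≤ degB g)
    (H : (Fin ((m + 1) + (m + 1)) → ZMod 2) → Fin ((m + 1) + (m + 1)) → ZMod 2)
    (hH : ∀ x (i : Fin (m + 1)),
      H x (Fin.castAdd (m + 1) i) =
        f (fun j : Fin (m + 2) => x ⟨i.val + j.val, by have := i.isLt; have := j.isLt; omega⟩) ∧
      H x (Fin.natAdd (m + 1) i) =
        g (fun j : Fin (m + 2) => x ⟨i.val + j.val, by have := i.isLt; have := j.isLt; omega⟩))
    (v : Fin ((m + 1) + (m + 1)) → ZMod 2) (hv : v ≠ 0)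
    (hlin : IsAffine (fun x => ∑ i, v i * H x i))
    (hvb : v (Fin.castAdd (m + 1) (Fin.last m)) = 0)
    (hv2b : v (Fin.natAdd (m + 1) (Fin.last m)) = 0)
    (v' : Fin ((m + 1) + (m + 1)) → ZMod 2)
    (hv'0 : v' (Fin.castAdd (m + 1) 0) = 0)
    (hv'b0 : v' (Fin.natAdd (m + 1) 0) = 0)
    (hv'L : ∀ i : Fin m, v' (Fin.castAdd (m + 1) i.succ) = v (Fin.castAdd (m + 1) i.castSucc))
    (hv'R : ∀ i : Fin m, v' (Fin.natAdd (m + 1) i.succ) = v (Fin.natAdd (m + 1) i.castSucc)) :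
    IsAffine (fun x => ∑ i, v' i * H x i) := by
  classical
  obtain ⟨a, c, hac⟩ := hlin
  set σ : (Fin ((m+1)+(m+1)) → ZMod 2) → (Fin ((m+1)+(m+1)) → ZMod 2) :=
    fun x j => if h : j.val + 1 < (m+1)+(m+1) then x ⟨j.val+1, h⟩ else 0 with hσ
  have HshiftL : ∀ x (i : Fin m),
      H x (Fin.castAdd (m+1) i.succ) = H (σ x) (Fin.castAdd (m+1) i.castSucc) := by
    intro x i
    rw [(hH x i.succ).1, (hH (σ x) i.castSucc).1]
    congr 1
    funext j
    have h1 : (i.castSucc : Fin (m+1)).val + j.val + 1 < (m+1)+(m+1) := by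
      have := i.isLt; have := j.isLt; simp only [Fin.coe_castSucc]; omega
    simp only [hσ, dif_pos h1]
    congr 1
    apply Fin.ext
    simp [Fin.val_succ]
    omega
  have HshiftR : ∀ x (i : Fin m),
      H x (Fin.natAdd (m+1) i.succ) = H (σ x) (Fin.natAdd (m+1) i.castSucc) := by
    intro x i
    rw [(hH x i.succ).2, (hH (σ x) i.castSucc).2]
    congr 1
    funext j
    have h1 : (i.castSucc : Fin (m+1)).val + j.val + 1 < (m+1)+(m+1) := by
      have := i.isLt; have := j.isLt; simp only [Fin.coe_castSucc]; omega
    simp only [hσ, dif_pos h1]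
    congr 1
    apply Fin.ext
    simp [Fin.val_succ]
    omega
  have key : ∀ x, (∑ i : Fin ((m+1)+(m+1)), v' i * H x i) = ∑ i, v i * H (σ x) i := by
    intro x
    have e1 : (∑ i : Fin ((m+1)+(m+1)), v' i * H x i)
        = (∑ i : Fin (m+1), v' (Fin.castAdd (m+1) i) * H x (Fin.castAdd (m+1) i))
        + (∑ i : Fin (m+1), v' (Fin.natAdd (m+1) i) * H x (Fin.natAdd (m+1) i)) :=
      Fin.sum_univ_add _
    have e2 : (∑ i : Fin ((m+1)+(m+1)), v i * H (σ x) i)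
        = (∑ i : Fin (m+1), v (Fin.castAdd (m+1) i) * H (σ x) (Fin.castAdd (m+1) i))
        + (∑ i : Fin (m+1), v (Fin.natAdd (m+1) i) * H (σ x) (Fin.natAdd (m+1) i)) :=
      Fin.sum_univ_add _
    have e3 : (∑ i : Fin (m+1), v' (Fin.castAdd (m+1) i) * H x (Fin.castAdd (m+1) i))
        = v' (Fin.castAdd (m+1) 0) * H x (Fin.castAdd (m+1) 0)
        + ∑ i : Fin m, v' (Fin.castAdd (m+1) i.succ) * H x (Fin.castAdd (m+1) i.succ) :=
      Fin.sum_univ_succ _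
    have e4 : (∑ i : Fin (m+1), v' (Fin.natAdd (m+1) i) * H x (Fin.natAdd (m+1) i))
        = v' (Fin.natAdd (m+1) 0) * H x (Fin.natAdd (m+1) 0)
        + ∑ i : Fin m, v' (Fin.natAdd (m+1) i.succ) * H x (Fin.natAdd (m+1) i.succ) :=
      Fin.sum_univ_succ _
    have e5 : (∑ i : Fin (m+1), v (Fin.castAdd (m+1) i) * H (σ x) (Fin.castAdd (m+1) i))
        = (∑ i : Fin m, v (Fin.castAdd (m+1) i.castSucc) * H (σ x) (Fin.castAdd (m+1) i.castSucc))
        + v (Fin.castAdd (m+1) (Fin.last m)) * H (σ x) (Fin.castAdd (m+1) (Fin.last m)) :=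
      Fin.sum_univ_castSucc _
    have e6 : (∑ i : Fin (m+1), v (Fin.natAdd (m+1) i) * H (σ x) (Fin.natAdd (m+1) i))
        = (∑ i : Fin m, v (Fin.natAdd (m+1) i.castSucc) * H (σ x) (Fin.natAdd (m+1) i.castSucc))
        + v (Fin.natAdd (m+1) (Fin.last m)) * H (σ x) (Fin.natAdd (m+1) (Fin.last m)) :=
      Fin.sum_univ_castSucc _
    rw [e1, e2, e3, e4, e5, e6, hv'0, hv'b0, hvb, hv2b]
    simp only [zero_mul, zero_add, add_zero]
    congr 1
    · exact Finset.sum_congr rfl fun i _ => by rw [hv'L i, HshiftL x i]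
    · exact Finset.sum_congr rfl fun i _ => by rw [hv'R i, HshiftR x i]
  refine ⟨fun j => if h : 1 ≤ j.val then a ⟨j.val - 1, by omega⟩ else 0, c, fun x => ?_⟩
  show (∑ i : Fin ((m+1)+(m+1)), v' i * H x i)
      = (∑ i : Fin ((m+1)+(m+1)), (if h : 1 ≤ i.val then a ⟨i.val - 1, by omega⟩ else 0) * x i) + c
  have h2 : (∑ i : Fin ((m+1)+(m+1)), v i * H (σ x) i) = (∑ i, a i * σ x i) + c := hac (σ x)
  rw [key x, h2]
  congr 1
  have e7 : (∑ i : Fin ((m+1)+(m+1)), a i * σ x i)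
      = (∑ i : Fin (m+1+m), a i.castSucc * σ x i.castSucc)
      + a (Fin.last (m+1+m)) * σ x (Fin.last (m+1+m)) :=
    Fin.sum_univ_castSucc _
  have e8 : (∑ i : Fin ((m+1)+(m+1)), (if h : 1 ≤ i.val then a ⟨i.val - 1, by omega⟩ else 0) * x i)
      = (if h : 1 ≤ ((0 : Fin (m+1+m+1))).val then a ⟨((0 : Fin (m+1+m+1))).val - 1, by omega⟩ else 0) * x (0 : Fin (m+1+m+1))
      + ∑ i : Fin (m+1+m), (if h : 1 ≤ (i.succ).val then a ⟨(i.succ).val - 1, by omega⟩ else 0) * x i.succ :=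
    Fin.sum_univ_succ _
  rw [e7, e8]
  have hlast : σ x (Fin.last (m+1+m)) = 0 := by
    simp only [hσ]
    rw [dif_neg]
    simp only [Fin.val_last]
    omega
  rw [hlast]
  simp only [mul_zero, add_zero, Fin.val_zero]
  erw [dif_neg (by omega : ¬ (1 ≤ 0)), zero_mul, zero_add]
  refine Finset.sum_congr rfl fun i _ => ?_
  have h1 : 1 ≤ (Fin.succ i).val := by simp [Fin.val_succ]
  rw [dif_pos h1]
  have h3 : (i.castSucc).val + 1 < (m+1)+(m+1) := by
    have := i.isLt; simp only [Fin.coe_castSucc]; omega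
  have he : (⟨(i.castSucc).val + 1, h3⟩ : Fin ((m+1)+(m+1))) = i.succ :=
    Fin.ext (by simp [Fin.val_succ])
  have hs : σ x i.castSucc = x i.succ := by
    simp only [hσ, dif_pos h3, he]
  have ha : a ⟨(i.succ).val - 1, by omega⟩ = a i.castSucc :=
    congrArg a (Fin.ext (by simp [Fin.val_succ]))
  rw [hs, ha]
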